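/- Combining the previous two facts: let σ₀,…,σ_n be nonnegative random variables adapted to a filtration with P(σᵢ < 2T/n | F_{i−1}) ≤ q a.s. for each i, where q ∈ (0,1) and n = 2k is even. Then P(σ₀ + ⋯ + σ_n ≤ T) ≤ C(n, k) · q^k ≤ (2√q)^n. -/

import Mathlib

open MeasureTheory

lemma step_cond_bound {Ω : Type*} {m m0 : MeasurableSpace Ω} (hm : m ≤ m0) (μ : Measure Ω)
    [IsProbabilityMeasure μ] (A B : Set Ω)
    (hA : MeasurableSet A) (hB : MeasurableSet[m] B) (q : ℝ)
    (hcond : ∀ᵐ ω ∂μ, (μ[A.indicator (fun _ => (1 : ℝ)) | m]) ω ≤ q) :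
    (μ (A ∩ B)).toReal ≤ q * (μ B).toReal := by
  have hf : Integrable (A.indicator (fun _ => (1 : ℝ))) μ :=
    (integrable_const 1).indicator hA
  have h1 : ∫ ω in B, A.indicator (fun _ => (1 : ℝ)) ω ∂μ = (μ (A ∩ B)).toReal := by
    rw [integral_indicator_const (1 : ℝ) hA, measureReal_def, Measure.restrict_apply hA, smul_eq_mul, mul_one]
  have h2 : ∫ ω in B, A.indicator (fun _ => (1 : ℝ)) ω ∂μ
      = ∫ ω in B, (μ[A.indicator (fun _ => (1 : ℝ)) | m]) ω ∂μ :=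
    (setIntegral_condExp hm hf hB).symm
  have h3 : ∫ ω in B, (μ[A.indicator (fun _ => (1 : ℝ)) | m]) ω ∂μ ≤ ∫ _ω in B, q ∂μ := by
    refine integral_mono_ae (integrable_condExp.restrict) (integrable_const q) ?_
    exact ae_restrict_of_ae hcond
  have h4 : ∫ _ω in B, q ∂μ = (μ B).toReal * q := by
    rw [setIntegral_const, smul_eq_mul, measureReal_def]
  calc (μ (A ∩ B)).toReal = ∫ ω in B, (μ[A.indicator (fun _ => (1 : ℝ)) | m]) ω ∂μ := by
        rw [← h2, h1]
    _ ≤ (μ B).toReal * q := h3.trans_eq h4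
    _ = q * (μ B).toReal := mul_comm _ _

theorem small_sum_probability_bound
    {Ω : Type*} {m0 : MeasurableSpace Ω} (μ : Measure Ω) [IsProbabilityMeasure μ]
    (k : ℕ) (n : ℕ) (hn : n = 2 * k) (hk : 0 < k)
    (σ : ℕ → Ω → ℝ) (hσpos : ∀ i ω, 0 ≤ σ i ω)
    (ℱ : ℕ → MeasurableSpace Ω) (hℱ : Monotone ℱ) (hℱle : ∀ i, ℱ i ≤ m0)
    (hadapt : ∀ i, @Measurable Ω ℝ (ℱ (i + 1)) _ (σ i))
    (T q : ℝ) (hT : 0 < T) (hq : q ∈ Set.Ioo (0 : ℝ) 1)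
    (hcond : ∀ i ≤ n,
      ∀ᵐ ω ∂μ,
        (μ[Set.indicator {ω' | σ i ω' < 2 * T / n} (fun _ => (1 : ℝ)) | ℱ i]) ω ≤ q) :
    μ {ω | ∑ i ∈ Finset.range (n + 1), σ i ω ≤ T} ≤
        ENNReal.ofReal ((n.choose k : ℝ) * q ^ k) ∧
      (n.choose k : ℝ) * q ^ k ≤ (2 * Real.sqrt q) ^ n := by
  obtain ⟨hq0, hq1⟩ := hq
  set A : ℕ → Set Ω := fun i => {ω' | σ i ω' < 2 * T / n} with hA_def
  have hAmeas : ∀ i, MeasurableSet[ℱ (i + 1)] (A i) := fun i =>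
    hadapt i measurableSet_Iio
  have hAmeas0 : ∀ i, MeasurableSet (A i) := fun i => hℱle (i + 1) _ (hAmeas i)
  -- key intersection bound
  have key : ∀ S : Finset ℕ, (∀ i ∈ S, i ≤ n) →
      (μ (⋂ i ∈ S, A i)).toReal ≤ q ^ S.card := by
    intro S
    induction S using Finset.induction_on_max with
    | empty =>
      intro _
      simp [measure_univ]
    | insert a S ha ih =>
      intro hSn
      have haS : a ∉ S := fun h => lt_irrefl a (ha a h)
      have hBm : MeasurableSet[ℱ a] (⋂ i ∈ S, A i) := by
        refine Finset.measurableSet_biInter S fun i hi => ?_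
        exact hℱ (Nat.succ_le_of_lt (ha i hi)) _ (hAmeas i)
      have hstep := step_cond_bound (hℱle a) μ (A a) (⋂ i ∈ S, A i)
        (hAmeas0 a) hBm q (hcond a (hSn a (Finset.mem_insert_self a S)))
      have hIH := ih (fun i hi => hSn i (Finset.mem_insert_of_mem hi))
      have : (μ (⋂ i ∈ insert a S, A i)).toReal ≤ q * q ^ S.card := by
        rw [Finset.set_biInter_insert]
        exact hstep.trans (mul_le_mul_of_nonneg_left hIH hq0.le)
      rw [Finset.card_insert_of_notMem haS, pow_succ]
      calc (μ (⋂ i ∈ insert a S, A i)).toReal ≤ q * q ^ S.card := this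
        _ = q ^ S.card * q := mul_comm _ _
  -- pigeonhole inclusion
  have hsub : {ω | ∑ i ∈ Finset.range (n + 1), σ i ω ≤ T} ⊆
      ⋃ S ∈ (Finset.range n).powersetCard k, ⋂ i ∈ S, A i := by
    intro ω hω
    simp only [Set.mem_setOf_eq] at hω
    set F := (Finset.range n).filter (fun i => σ i ω < 2 * T / n) with hF_def
    have hk0 : ((k : ℝ)) ≠ 0 := by exact_mod_cast hk.ne'
    have hc : 2 * T / (n : ℝ) = T / k := by
      rw [hn]; push_cast; field_simp
    have hkF : k ≤ F.card := by
      by_contra h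
      push_neg at h
      set G := Finset.range n \ F with hG_def
      have hGcard : k + 1 ≤ G.card := by
        have h1 : G.card = n - F.card := by
          rw [hG_def, Finset.card_sdiff_of_subset (Finset.filter_subset _ _), Finset.card_range]
        omega
      have hGbig : ∀ i ∈ G, 2 * T / n ≤ σ i ω := by
        intro i hi
        rw [hG_def, Finset.mem_sdiff, hF_def, Finset.mem_filter] at hi
        push_neg at hi
        exact hi.2 hi.1
      have hsum1 : ∑ i ∈ G, σ i ω ≤ ∑ i ∈ Finset.range (n + 1), σ i ω := by
        refine Finset.sum_le_sum_of_subset_of_nonneg ?_ (fun i _ _ => hσpos i ω)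
        exact (Finset.sdiff_subset).trans (Finset.range_subset_range.2 (Nat.le_succ n))
      have hsum2 : (G.card : ℝ) * (2 * T / n) ≤ ∑ i ∈ G, σ i ω := by
        calc (G.card : ℝ) * (2 * T / n) = ∑ _i ∈ G, 2 * T / n := by
              rw [Finset.sum_const, nsmul_eq_mul]
          _ ≤ ∑ i ∈ G, σ i ω := Finset.sum_le_sum hGbig
      have hTlt : T < (G.card : ℝ) * (2 * T / n) := by
        rw [hc]
        have h1 : ((k : ℝ) + 1) * (T / k) ≤ (G.card : ℝ) * (T / k) := by
          refine mul_le_mul_of_nonneg_right ?_ (by positivity)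
          exact_mod_cast hGcard
        refine lt_of_lt_of_le ?_ h1
        have hk0' : (0:ℝ) < k := by exact_mod_cast hk
        rw [← mul_div_assoc, lt_div_iff₀ hk0']
        nlinarith
      linarith
    obtain ⟨S, hSF, hScard⟩ := Finset.exists_subset_card_eq hkF
    have h1 : S ∈ (Finset.range n).powersetCard k :=
      Finset.mem_powersetCard.2 ⟨hSF.trans (Finset.filter_subset _ _), hScard⟩
    have h2 : ω ∈ ⋂ i ∈ S, A i := by
      refine Set.mem_iInter₂.2 fun i hi => ?_
      have := hSF hi
      rw [hF_def, Finset.mem_filter] at this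
      exact this.2
    exact Set.mem_biUnion (x := S) h1 h2
  -- union bound
  have hqk : (0:ℝ) ≤ q ^ k := pow_nonneg hq0.le k
  have hUB : μ {ω | ∑ i ∈ Finset.range (n + 1), σ i ω ≤ T} ≤
      ENNReal.ofReal ((n.choose k : ℝ) * q ^ k) := by
    refine (measure_mono hsub).trans ?_
    refine (measure_biUnion_finset_le _ _).trans ?_
    have hbound : ∀ S ∈ (Finset.range n).powersetCard k,
        μ (⋂ i ∈ S, A i) ≤ ENNReal.ofReal (q ^ k) := by
      intro S hS
      rw [Finset.mem_powersetCard] at hS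
      have h1 := key S (fun i hi => by
        have := hS.1 hi; rw [Finset.mem_range] at this; omega)
      rw [hS.2] at h1
      exact (ENNReal.le_ofReal_iff_toReal_le (measure_ne_top μ _) hqk).2 h1
    calc ∑ S ∈ (Finset.range n).powersetCard k, μ (⋂ i ∈ S, A i)
        ≤ ∑ _S ∈ (Finset.range n).powersetCard k, ENNReal.ofReal (q ^ k) :=
          Finset.sum_le_sum hbound
      _ = ((Finset.range n).powersetCard k).card • ENNReal.ofReal (q ^ k) := by
          rw [Finset.sum_const]
      _ = ENNReal.ofReal ((n.choose k : ℝ) * q ^ k) := by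
          rw [Finset.card_powersetCard, Finset.card_range, nsmul_eq_mul,
            ENNReal.ofReal_mul (by positivity), ENNReal.ofReal_natCast]
  refine ⟨hUB, ?_⟩
  -- second inequality
  have h2n : (n.choose k : ℝ) ≤ 2 ^ n := by
    have : n.choose k ≤ 2 ^ n := by
      calc n.choose k ≤ ∑ i ∈ Finset.range (n + 1), n.choose i :=
            Finset.single_le_sum (fun i _ => Nat.zero_le _)
              (Finset.mem_range.2 (by omega))
        _ = 2 ^ n := Nat.sum_range_choose n
    exact_mod_cast this
  have hsq : (Real.sqrt q) ^ n = q ^ k := by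
    rw [hn, pow_mul, Real.sq_sqrt hq0.le]
  calc (n.choose k : ℝ) * q ^ k ≤ 2 ^ n * q ^ k :=
        mul_le_mul_of_nonneg_right h2n hqk
    _ = (2 * Real.sqrt q) ^ n := by rw [mul_pow, hsq]
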